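/- Let V be a finite set and K a simplicial complex on V with K ≠ 2^V. Then the Bier sphere Bier(K) is a flag complex (every minimal non-face has at most 2 elements) if and only if both K and its Alexander dual K̂ are flag complexes. -/
import Mathlib


/-- A simplicial complex on a ground type `V`: a collection of finite subsets of `V`
containing the empty set and closed under taking subsets. -/
def IsSimplicialComplex {V : Type*} (K : Set (Finset V)) : Prop :=
  ∅ ∈ K ∧ ∀ s ∈ K, ∀ t ⊆ s, t ∈ K

/-- A minimal non-face of `K`: not a face, but all proper subsets are faces. -/
def IsMinNonFace {V : Type*} (K : Set (Finset V)) (s : Finset V) : Prop :=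
  s ∉ K ∧ ∀ t ⊂ s, t ∈ K

/-- The Alexander dual of `K`, with the primed copy `V'` identified with `V`:
faces are those `τ` with `V \ τ` not a face of `K`. -/
def alexDual {V : Type*} [Fintype V] [DecidableEq V] (K : Set (Finset V)) :
    Set (Finset V) :=
  {τ | Finset.univ \ τ ∉ K}

/-- The Bier sphere of `K`: the deleted join of `K` and its Alexander dual, a complex on
`V ⊕ V` (left summand = `V`, right summand = the primed copy `V'`). -/
def bier {V : Type*} [Fintype V] [DecidableEq V] (K : Set (Finset V)) :
    Set (Finset (V ⊕ V)) :=
  {ρ | ∃ σ τ : Finset V, σ ∈ K ∧ τ ∈ alexDual K ∧ Disjoint σ τ ∧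
    ρ = σ.image Sum.inl ∪ τ.image Sum.inr}

/-- A flag simplicial complex: every minimal non-face has at most two elements. -/
def IsFlag {V : Type*} (K : Set (Finset V)) : Prop :=
  ∀ s : Finset V, IsMinNonFace K s → s.card ≤ 2

section BierAux

variable {V : Type*} [Fintype V] [DecidableEq V] {K : Set (Finset V)}

lemma image_union_eq_disjSum (σ τ : Finset V) :
    σ.image Sum.inl ∪ τ.image Sum.inr = σ.disjSum τ := by
  ext x; cases x <;> simp

lemma mem_bier_iff {ρ : Finset (V ⊕ V)} :
    ρ ∈ bier K ↔ ρ.toLeft ∈ K ∧ ρ.toRight ∈ alexDual K ∧ Disjoint ρ.toLeft ρ.toRight := by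
  constructor
  · rintro ⟨σ, τ, h1, h2, h3, rfl⟩
    rw [image_union_eq_disjSum]
    simpa using ⟨h1, h2, h3⟩
  · rintro ⟨h1, h2, h3⟩
    exact ⟨ρ.toLeft, ρ.toRight, h1, h2, h3, by
      rw [image_union_eq_disjSum, Finset.toLeft_disjSum_toRight]⟩

lemma univ_not_mem (hK : IsSimplicialComplex K) (hne : K ≠ Set.univ) :
    (Finset.univ : Finset V) ∉ K := fun h =>
  hne (Set.eq_univ_of_forall fun s => hK.2 _ h s (Finset.subset_univ s))

lemma empty_mem_dual (hK : IsSimplicialComplex K) (hne : K ≠ Set.univ) :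
    (∅ : Finset V) ∈ alexDual K := by
  simpa [alexDual] using univ_not_mem hK hne

end BierAux

/-- the Bier sphere is flag iff both `K` and its Alexander dual are flag. -/
theorem bier_flag_iff {V : Type*} [Fintype V] [DecidableEq V]
    (K : Set (Finset V)) (hK : IsSimplicialComplex K) (hne : K ≠ Set.univ) :
    IsFlag (bier K) ↔ IsFlag K ∧ IsFlag (alexDual K) := by
  constructor
  · intro hB
    constructor
    · -- K is flag
      intro s hs
      have h := hB (s.disjSum ∅) ?_
      · simpa using h
      constructor
      · rw [mem_bier_iff]
        simp only [Finset.toLeft_disjSum, Finset.toRight_disjSum]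
        intro h; exact hs.1 h.1
      · intro t ht
        have hsubL : t.toLeft ⊆ s := by
          have := Finset.toLeft_subset_toLeft ht.subset
          rwa [Finset.toLeft_disjSum] at this
        have htR : t.toRight = ∅ := by
          have := Finset.toRight_subset_toRight ht.subset
          rw [Finset.toRight_disjSum] at this
          exact Finset.subset_empty.mp this
        have htL : t.toLeft ⊂ s := by
          refine ⟨hsubL, fun hsub => ?_⟩
          apply ht.ne
          rw [← Finset.toLeft_disjSum_toRight (u := t), htR]
          exact congrArg (·.disjSum ∅) (le_antisymm hsubL hsub)
        rw [mem_bier_iff, htR]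
        exact ⟨hs.2 _ htL, empty_mem_dual hK hne, by simp⟩
    · -- alexDual K is flag
      intro s hs
      have h := hB ((∅ : Finset V).disjSum s) ?_
      · simpa using h
      constructor
      · rw [mem_bier_iff]
        simp only [Finset.toLeft_disjSum, Finset.toRight_disjSum]
        intro h; exact hs.1 h.2.1
      · intro t ht
        have hsubR : t.toRight ⊆ s := by
          have := Finset.toRight_subset_toRight ht.subset
          rwa [Finset.toRight_disjSum] at this
        have htL : t.toLeft = ∅ := by
          have := Finset.toLeft_subset_toLeft ht.subset
          rw [Finset.toLeft_disjSum] at this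
          exact Finset.subset_empty.mp this
        have htR : t.toRight ⊂ s := by
          refine ⟨hsubR, fun hsub => ?_⟩
          apply ht.ne
          rw [← Finset.toLeft_disjSum_toRight (u := t), htL]
          exact congrArg (Finset.disjSum ∅) (le_antisymm hsubR hsub)
        rw [mem_bier_iff, htL]
        exact ⟨hK.1, hs.2 _ htR, by simp⟩
  · rintro ⟨hKf, hDf⟩ ρ ⟨hρ, hmin⟩
    set A := ρ.toLeft with hA
    set B := ρ.toRight with hB
    have hρeq : ρ = A.disjSum B := (Finset.toLeft_disjSum_toRight (u := ρ)).symm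
    rw [mem_bier_iff] at hρ
    push_neg at hρ
    by_cases hdisj : Disjoint A B
    · by_cases hAK : A ∈ K
      · -- then B ∉ alexDual K
        have hBD : B ∉ alexDual K := fun hBD => hρ hAK hBD hdisj
        -- ρ' = ∅.disjSum B equals ρ
        have hsub : (∅ : Finset V).disjSum B ⊆ ρ := by
          rw [hρeq]; exact Finset.disjSum_mono (Finset.empty_subset A) (Finset.Subset.refl B)
        have hnotin : (∅ : Finset V).disjSum B ∉ bier K := by
          rw [mem_bier_iff]
          simp only [Finset.toLeft_disjSum, Finset.toRight_disjSum]
          intro h; exact hBD h.2.1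
        have heq : (∅ : Finset V).disjSum B = ρ := by
          by_contra hneq
          exact hnotin (hmin _ (Finset.ssubset_iff_subset_ne.mpr ⟨hsub, hneq⟩))
        -- B is a minimal non-face of alexDual K
        have hBmin : IsMinNonFace (alexDual K) B := by
          refine ⟨hBD, fun t ht => ?_⟩
          have : (∅ : Finset V).disjSum t ⊂ ρ := by
            rw [← heq]
            exact Finset.disjSum_ssubset_disjSum_of_subset_of_ssubset (Finset.Subset.refl ∅) ht
          have h2 := hmin _ this
          rw [mem_bier_iff, Finset.toRight_disjSum] at h2
          exact h2.2.1
        calc ρ.card = B.card := by rw [← heq]; simp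
          _ ≤ 2 := hDf B hBmin
      · -- A ∉ K
        have hsub : A.disjSum ∅ ⊆ ρ := by
          rw [hρeq]; exact Finset.disjSum_mono (Finset.Subset.refl A) (Finset.empty_subset B)
        have hnotin : A.disjSum (∅ : Finset V) ∉ bier K := by
          rw [mem_bier_iff]
          simp only [Finset.toLeft_disjSum, Finset.toRight_disjSum]
          intro h; exact hAK h.1
        have heq : A.disjSum (∅ : Finset V) = ρ := by
          by_contra hneq
          exact hnotin (hmin _ (Finset.ssubset_iff_subset_ne.mpr ⟨hsub, hneq⟩))
        have hAmin : IsMinNonFace K A := by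
          refine ⟨hAK, fun t ht => ?_⟩
          have : t.disjSum (∅ : Finset V) ⊂ ρ := by
            rw [← heq]
            exact Finset.disjSum_ssubset_disjSum_of_ssubset_of_subset ht (Finset.Subset.refl ∅)
          have h2 := hmin _ this
          rw [mem_bier_iff, Finset.toLeft_disjSum] at h2
          exact h2.1
        calc ρ.card = A.card := by rw [← heq]; simp
          _ ≤ 2 := hKf A hAmin
    · -- not disjoint: ρ = {inl v, inr v}
      obtain ⟨v, hvA, hvB⟩ := Finset.not_disjoint_iff.mp hdisj
      have hsub : ({Sum.inl v, Sum.inr v} : Finset (V ⊕ V)) ⊆ ρ := by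
        intro x hx
        simp only [Finset.mem_insert, Finset.mem_singleton] at hx
        rcases hx with rfl | rfl
        · exact Finset.mem_toLeft.mp hvA
        · exact Finset.mem_toRight.mp hvB
      have hnotin : ({Sum.inl v, Sum.inr v} : Finset (V ⊕ V)) ∉ bier K := by
        rw [mem_bier_iff]
        rintro ⟨-, -, hd⟩
        have h1 : v ∈ ({Sum.inl v, Sum.inr v} : Finset (V ⊕ V)).toLeft := by simp
        have h2 : v ∈ ({Sum.inl v, Sum.inr v} : Finset (V ⊕ V)).toRight := by simp
        exact Finset.disjoint_left.mp hd h1 h2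
      have heq : ({Sum.inl v, Sum.inr v} : Finset (V ⊕ V)) = ρ := by
        by_contra hneq
        exact hnotin (hmin _ (Finset.ssubset_iff_subset_ne.mpr ⟨hsub, hneq⟩))
      rw [← heq]
      exact Finset.card_insert_le _ _ |>.trans (by simp)
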